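/- Let s ≥ 1 and 0 ≤ r ≤ s, let F be the 2^s × 2^s inclusion matrix over F_2 (F(S, T) = 1 iff T ⊆ S), and let W be the 2^s × m submatrix of F keeping the columns indexed by {T : |T| ≤ r}, where m = Σ_{i=0}^{r} C(s, i). Let u be uniformly distributed on F_2^{2^s} and c = u·W. Then for every set B of input coordinates with |B| ≤ 2^{s−r} − 1, the vector (u_S)_{S∈B} is independent of c; i.e., the Reed–Muller-based coding scheme is t-threshold secure with t = 2^{s−r} − 1. -/

import Mathlib

open Matrix

/-- The `2^s × m` matrix `W` of the Reed–Muller-based scheme: the submatrix of the `s`-fold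
Kronecker power of `[[1,0],[1,1]]` (the inclusion matrix `F(S,T) = 1` iff `T ⊆ S`) keeping
the columns indexed by subsets `T` with `|T| ≤ r`. -/
def rmW (s r : ℕ) :
    Matrix (Finset (Fin s)) {T : Finset (Fin s) // T.card ≤ r} (ZMod 2) :=
  Matrix.of fun S T => if T.1 ⊆ S then 1 else 0

namespace RMaux

open Finset

set_option linter.unusedSectionVars false

variable {ι : Type*} [Fintype ι] [DecidableEq ι]

def zeta (v : Finset ι → ZMod 2) (S : Finset ι) : ZMod 2 := ∑ T ∈ S.powerset, v T

lemma zeta_add (v w : Finset ι → ZMod 2) (S : Finset ι) :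
    zeta (v + w) S = zeta v S + zeta w S := by
  simp [zeta, Finset.sum_add_distrib]

lemma zeta_ne_zero {v : Finset ι → ZMod 2} (hv : v ≠ 0) : ∃ S, zeta v S ≠ 0 := by
  have hne : (univ.filter fun T => v T ≠ 0).Nonempty := by
    rcases Function.ne_iff.1 hv with ⟨T, hT⟩
    exact ⟨T, by simpa using hT⟩
  obtain ⟨T, hTmem, hTmin⟩ := Finset.exists_min_image _ Finset.card hne
  have hvT : v T ≠ 0 := by simpa using hTmem
  refine ⟨T, ?_⟩
  have : zeta v T = v T := by
    refine Finset.sum_eq_single T (fun T' hT' hne' => ?_) (by simp)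
    by_contra h
    have hle := hTmin T' (by simpa using h)
    have hsub : T' ⊆ T := Finset.mem_powerset.1 hT'
    have : T'.card < T.card := Finset.card_lt_card (lt_of_le_of_ne hsub hne')
    omega
  rw [this]; exact hvT

lemma powerset_map' {α β : Type*} (f : α ↪ β) (s : Finset α) :
    (s.map f).powerset = s.powerset.map ⟨Finset.map f, fun _ _ h => Finset.map_injective f h⟩ := by
  ext t
  simp only [mem_powerset, mem_map, Function.Embedding.coeFn_mk, Finset.subset_map_iff]
  constructor
  · rintro ⟨u, hu, rfl⟩; exact ⟨u, hu, rfl⟩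
  · rintro ⟨u, hu, rfl⟩; exact ⟨u, hu, rfl⟩

lemma zeta_map (a : ι) (v : Finset ι → ZMod 2) (S' : Finset {x : ι // x ≠ a}) :
    zeta v (S'.map (Function.Embedding.subtype _)) =
      zeta (fun T => v (T.map (Function.Embedding.subtype _))) S' := by
  unfold zeta
  rw [powerset_map', Finset.sum_map]
  rfl

lemma not_mem_map_subtype (a : ι) (S' : Finset {x : ι // x ≠ a}) :
    a ∉ S'.map (Function.Embedding.subtype _) := by
  simp

lemma zeta_insert (a : ι) (v : Finset ι → ZMod 2) (S' : Finset {x : ι // x ≠ a}) :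
    zeta v (insert a (S'.map (Function.Embedding.subtype _))) =
      zeta (fun T => v (T.map (Function.Embedding.subtype _))) S'
        + zeta (fun T => v (insert a (T.map (Function.Embedding.subtype _)))) S' := by
  unfold zeta
  rw [Finset.sum_powerset_insert (not_mem_map_subtype a S'), powerset_map',
    Finset.sum_map, Finset.sum_map]
  rfl

lemma map_subtype_of_not_mem {a : ι} {S : Finset ι} (h : a ∉ S) :
    (S.subtype (· ≠ a)).map (Function.Embedding.subtype _) = S := by
  rw [Finset.subtype_map]
  exact Finset.filter_eq_self.2 fun x hx e => h (e ▸ hx)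

lemma subtype_map_eq (a : ι) (S' : Finset {x : ι // x ≠ a}) :
    ((S'.map (Function.Embedding.subtype _)).subtype (· ≠ a)) = S' := by
  apply Finset.map_injective (Function.Embedding.subtype (fun x : ι => x ≠ a))
  rw [Finset.subtype_map]
  apply Finset.filter_eq_self.2
  intro x hx
  rcases Finset.mem_map.1 hx with ⟨y, _, rfl⟩
  exact y.2


lemma zeta_support_card (n : ℕ) :
    ∀ (ι : Type) [Fintype ι] [DecidableEq ι], Fintype.card ι = n →
    ∀ (r : ℕ) (v : Finset ι → ZMod 2), r ≤ n → v ≠ 0 →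
      (∀ T, v T ≠ 0 → T.card ≤ r) →
      2 ^ (n - r) ≤ (univ.filter fun S => zeta v S ≠ 0).card := by
  induction n with
  | zero =>
    intro ι _ _ hcard r v hr hv hsupp
    obtain ⟨S, hS⟩ := zeta_ne_zero hv
    have hmem : S ∈ univ.filter fun S => zeta v S ≠ 0 := by simp [hS]
    have := Finset.card_pos.2 ⟨S, hmem⟩
    interval_cases r
    simpa using this
  | succ m ih =>
    intro ι _ _ hcard r v hr hv hsupp
    by_cases hr' : r ≤ m
    swap
    · -- r = m + 1
      have hrm : m + 1 - r = 0 := by omega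
      obtain ⟨S, hS⟩ := zeta_ne_zero hv
      have hmem : S ∈ univ.filter fun S => zeta v S ≠ 0 := by simp [hS]
      have := Finset.card_pos.2 ⟨S, hmem⟩
      rw [hrm]
      simpa using this
    obtain ⟨a⟩ : Nonempty ι := Fintype.card_pos_iff.1 (by omega)
    have hcard' : Fintype.card {x : ι // x ≠ a} = m := by
      have h1 : Fintype.card {x : ι // ¬ x = a} = Fintype.card ι - Fintype.card {x : ι // x = a} :=
        Fintype.card_subtype_compl _
      rw [Fintype.card_subtype_eq] at h1
      simpa [hcard] using h1
    set emb : {x : ι // x ≠ a} ↪ ι := Function.Embedding.subtype _ with hemb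
    set v₀ : Finset {x : ι // x ≠ a} → ZMod 2 := fun T => v (T.map emb) with hv₀
    set v₁ : Finset {x : ι // x ≠ a} → ZMod 2 := fun T => v (insert a (T.map emb)) with hv₁
    -- splitting the count
    have hsplit := Finset.card_filter_add_card_filter_not
      (s := univ.filter fun S : Finset ι => zeta v S ≠ 0) (p := fun S => a ∉ S)
    simp only [Finset.filter_filter, not_not] at hsplit
    have hfree : ((univ.filter fun S : Finset ι => zeta v S ≠ 0).filter fun S => a ∉ S).card
        = (univ.filter fun S' : Finset {x : ι // x ≠ a} => zeta v₀ S' ≠ 0).card := by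
      apply Finset.card_nbij' (i := fun S => S.subtype (· ≠ a)) (j := fun S' => S'.map emb)
      · intro S hS
        simp only [Finset.mem_coe, Finset.mem_filter, Finset.mem_univ, true_and] at hS ⊢
        have hmap : (S.subtype (· ≠ a)).map emb = S := map_subtype_of_not_mem hS.2
        have := zeta_map a v (S.subtype (· ≠ a))
        rw [hmap] at this
        rw [hv₀, ← this]
        exact hS.1
      · intro S' hS'
        simp only [Finset.mem_coe, Finset.mem_filter, Finset.mem_univ, true_and] at hS' ⊢
        refine ⟨?_, not_mem_map_subtype a S'⟩
        rw [zeta_map a v S']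
        exact hS'
      · intro S hS
        simp only [Finset.mem_coe, Finset.mem_filter, Finset.mem_univ, true_and] at hS
        exact map_subtype_of_not_mem hS.2
      · intro S' _
        exact subtype_map_eq a S'
    have hins : ((univ.filter fun S : Finset ι => zeta v S ≠ 0).filter fun S => a ∈ S).card
        = (univ.filter fun S' : Finset {x : ι // x ≠ a} => zeta (v₀ + v₁) S' ≠ 0).card := by
      apply Finset.card_nbij' (i := fun S => (S.erase a).subtype (· ≠ a))
        (j := fun S' => insert a (S'.map emb))
      · intro S hS
        simp only [Finset.mem_coe, Finset.mem_filter, Finset.mem_univ, true_and] at hS ⊢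
        have hmap : ((S.erase a).subtype (· ≠ a)).map emb = S.erase a :=
          map_subtype_of_not_mem (Finset.notMem_erase a S)
        rw [zeta_add, hv₀, hv₁, ← zeta_insert a v, hmap, Finset.insert_erase hS.2]
        exact hS.1
      · intro S' hS'
        simp only [Finset.mem_coe, Finset.mem_filter, Finset.mem_univ, true_and] at hS' ⊢
        refine ⟨?_, Finset.mem_insert_self a _⟩
        rw [zeta_insert a v S']
        rw [zeta_add] at hS'
        exact hS'
      · intro S hS
        simp only [Finset.mem_coe, Finset.mem_filter, Finset.mem_univ, true_and] at hS
        have hmap : ((S.erase a).subtype (· ≠ a)).map emb = S.erase a :=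
          map_subtype_of_not_mem (Finset.notMem_erase a S)
        dsimp only
        rw [hmap, Finset.insert_erase hS.2]
      · intro S' _
        dsimp only
        rw [Finset.erase_insert (not_mem_map_subtype a S'), subtype_map_eq a S']
    rw [Finset.filter_filter] at hfree hins
    have hpow : m + 1 - r = (m - r) + 1 := by omega
    by_cases hcase : v₁ = 0
    · -- v₁ = 0 : both halves are governed by v₀
      have hv0ne : v₀ ≠ 0 := by
        rcases Function.ne_iff.1 hv with ⟨T, hT⟩
        by_cases haT : a ∈ T
        · exfalso
          have : v₁ ((T.erase a).subtype (· ≠ a)) ≠ 0 := by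
            rw [hv₁]
            simp only []
            rw [map_subtype_of_not_mem (Finset.notMem_erase a T), Finset.insert_erase haT]
            simpa using hT
          rw [hcase] at this
          exact this rfl
        · apply Function.ne_iff.2
          exact ⟨T.subtype (· ≠ a), by
            rw [hv₀]
            simp only []
            rw [map_subtype_of_not_mem haT]
            simpa using hT⟩
      have hsupp₀ : ∀ T, v₀ T ≠ 0 → T.card ≤ r := by
        intro T hT
        have := hsupp _ hT
        rwa [Finset.card_map] at this
      have hIH := ih {x : ι // x ≠ a} hcard' r v₀ hr' hv0ne hsupp₀
      have heq : v₀ + v₁ = v₀ := by rw [hcase, add_zero]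
      rw [heq] at hins
      rw [hpow, pow_succ]
      omega
    · -- v₁ ≠ 0
      have hr1 : 1 ≤ r := by
        rcases Function.ne_iff.1 hcase with ⟨T', hT'⟩
        have h1 := hsupp _ hT'
        have h2 : 0 < (insert a (T'.map emb)).card := Finset.card_pos.2 ⟨a, Finset.mem_insert_self a _⟩
        omega
      have hsupp₁ : ∀ T, v₁ T ≠ 0 → T.card ≤ r - 1 := by
        intro T hT
        have h1 := hsupp _ hT
        rw [Finset.card_insert_of_notMem (not_mem_map_subtype a T), Finset.card_map] at h1
        omega
      have hr1m : r - 1 ≤ m := by omega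
      have hpow1 : m - (r - 1) = m + 1 - r := by omega
      by_cases hc0 : v₀ = 0
      · -- v₀ = 0 : the "insert" half is governed by v₁
        have heq : v₀ + v₁ = v₁ := by rw [hc0, zero_add]
        rw [heq] at hins
        have hIH := ih {x : ι // x ≠ a} hcard' (r - 1) v₁ hr1m hcase hsupp₁
        rw [hpow1] at hIH
        omega
      · by_cases hc01 : v₀ + v₁ = 0
        · -- v₀ + v₁ = 0 : the "free" half is governed by v₀, supported in degree ≤ r-1
          have hsupp₀ : ∀ T, v₀ T ≠ 0 → T.card ≤ r - 1 := by
            intro T hT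
            apply hsupp₁
            intro h1
            have := congrFun hc01 T
            rw [Pi.add_apply, h1, add_zero] at this
            exact hT this
          have hIH := ih {x : ι // x ≠ a} hcard' (r - 1) v₀ hr1m hc0 hsupp₀
          rw [hpow1] at hIH
          omega
        · -- both halves nonzero of degree ≤ r
          have hsupp₀ : ∀ T, v₀ T ≠ 0 → T.card ≤ r := by
            intro T hT
            have := hsupp _ hT
            rwa [Finset.card_map] at this
          have hsupp₀₁ : ∀ T, (v₀ + v₁) T ≠ 0 → T.card ≤ r := by
            intro T hT
            rw [Pi.add_apply] at hT
            by_cases h0 : v₀ T = 0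
            · have h1 : v₁ T ≠ 0 := by
                intro h1; rw [h0, h1, add_zero] at hT; exact hT rfl
              have := hsupp₁ T h1
              omega
            · exact hsupp₀ T h0
          have hIH0 := ih {x : ι // x ≠ a} hcard' r v₀ hr' hc0 hsupp₀
          have hIH1 := ih {x : ι // x ≠ a} hcard' r (v₀ + v₁) hr' hc01 hsupp₀₁
          rw [hpow, pow_succ]
          omega


lemma vecMul_surj {κ₁ κ₂ : Type*} [Fintype κ₁] [Fintype κ₂] [DecidableEq κ₁] [DecidableEq κ₂]
    (M : Matrix κ₁ κ₂ (ZMod 2)) (h : ∀ x, M.mulVec x = 0 → x = 0) :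
    Function.Surjective fun u => Matrix.vecMul u M := by
  have hinj : Function.Injective M.mulVecLin := by
    intro x y hxy
    have h2 : M.mulVec (x - y) = 0 := by
      rw [Matrix.mulVec_sub, show M.mulVec x = M.mulVec y from hxy, sub_self]
    exact sub_eq_zero.1 (h _ h2)
  have h1 : Matrix.rank M = Fintype.card κ₂ := by
    rw [Matrix.rank, LinearMap.finrank_range_of_inj hinj, Module.finrank_fintype_fun_eq_card]
  have h3 : LinearMap.range Mᵀ.mulVecLin = ⊤ := by
    apply Submodule.eq_top_of_finrank_eq
    have : Module.finrank (ZMod 2) (LinearMap.range Mᵀ.mulVecLin) = Matrix.rank Mᵀ := rfl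
    rw [this, Matrix.rank_transpose, h1, Module.finrank_fintype_fun_eq_card]
  intro y
  obtain ⟨u, hu⟩ := LinearMap.range_eq_top.1 h3 y
  refine ⟨u, ?_⟩
  show Matrix.vecMul u M = y
  rw [← Matrix.mulVec_transpose]
  exact hu

lemma fiber_card {V X : Type*} [Fintype V] [AddCommGroup V] [Fintype X] [DecidableEq X]
    [AddCommGroup X] (φ : V →+ X) (hsurj : Function.Surjective φ) (y : X) :
    (univ.filter fun u => φ u = y).card * Fintype.card X = Fintype.card V := by
  classical
  have hfib : ∀ y₁ y₂ : X,
      (univ.filter fun u => φ u = y₁).card = (univ.filter fun u => φ u = y₂).card := by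
    intro y₁ y₂
    obtain ⟨u₁, hu₁⟩ := hsurj y₁
    obtain ⟨u₂, hu₂⟩ := hsurj y₂
    apply Finset.card_nbij' (i := fun u => u - u₁ + u₂) (j := fun u => u - u₂ + u₁)
    · intro u hu
      simp only [Finset.mem_coe, Finset.mem_filter, Finset.mem_univ, true_and] at hu ⊢
      rw [map_add, map_sub, hu, hu₁, hu₂, sub_self, zero_add]
    · intro u hu
      simp only [Finset.mem_coe, Finset.mem_filter, Finset.mem_univ, true_and] at hu ⊢
      rw [map_add, map_sub, hu, hu₁, hu₂, sub_self, zero_add]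
    · intro u _; simp
    · intro u _; simp
  have hsum : Fintype.card V = ∑ z : X, (univ.filter fun u => φ u = z).card := by
    rw [← Finset.card_univ]
    exact Finset.card_eq_sum_card_fiberwise (fun u _ => Finset.mem_univ (φ u))
  rw [hsum, Finset.sum_congr rfl fun z _ => hfib z y, Finset.sum_const, Finset.card_univ,
    smul_eq_mul, mul_comm]

lemma joint_surjective (s r : ℕ) (hr : r ≤ s) (B : Finset (Finset (Fin s)))
    (hB : B.card ≤ 2 ^ (s - r) - 1) :
    Function.Surjective (fun u : Finset (Fin s) → ZMod 2 =>
      ((fun S : {S // S ∈ B} => u S.1), Matrix.vecMul u (rmW s r))) := by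
  classical
  set M : Matrix (Finset (Fin s)) ({S // S ∈ B} ⊕ {T : Finset (Fin s) // T.card ≤ r}) (ZMod 2) :=
    Matrix.of fun S i => Sum.elim (fun b : {S // S ∈ B} => if b.1 = S then (1 : ZMod 2) else 0)
      (fun T : {T : Finset (Fin s) // T.card ≤ r} => if T.1 ⊆ S then 1 else 0) i with hM
  have hker : ∀ x, M.mulVec x = 0 → x = 0 := by
    intro x hx
    set v : Finset (Fin s) → ZMod 2 :=
      fun T => if h : T.card ≤ r then x (Sum.inr ⟨T, h⟩) else 0 with hvdef
    have hxv : ∀ T : {T : Finset (Fin s) // T.card ≤ r}, x (Sum.inr T) = v T.1 := by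
      intro T
      rw [hvdef]
      simp only [Subtype.coe_eta, dite_eq_ite]
      exact (if_pos T.2).symm
    have hzeta : ∀ S, zeta v S = if h : S ∈ B then x (Sum.inl ⟨S, h⟩) else 0 := by
      intro S
      have h0 := congrFun hx S
      rw [Matrix.mulVec, dotProduct, Fintype.sum_sum_type] at h0
      have e1 : ∑ b : {S' // S' ∈ B}, M S (Sum.inl b) * x (Sum.inl b)
          = if h : S ∈ B then x (Sum.inl ⟨S, h⟩) else 0 := by
        by_cases h : S ∈ B
        · rw [dif_pos h]
          rw [Finset.sum_eq_single (⟨S, h⟩ : {S' // S' ∈ B})]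
          · simp [hM]
          · intro b _ hb
            have hbS : b.1 ≠ S := fun e => hb (Subtype.ext e)
            simp [hM, hbS]
          · simp
        · rw [dif_neg h]
          apply Finset.sum_eq_zero
          intro b _
          have hbS : b.1 ≠ S := fun e => h (e ▸ b.2)
          simp [hM, hbS]
      have e2 : ∑ T : {T : Finset (Fin s) // T.card ≤ r}, M S (Sum.inr T) * x (Sum.inr T)
          = zeta v S := by
        have step1 : ∀ T : {T : Finset (Fin s) // T.card ≤ r},
            M S (Sum.inr T) * x (Sum.inr T)
            = (fun U : Finset (Fin s) => (if U ⊆ S then 1 else 0) * v U) T.1 := by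
          intro T
          rw [hxv]
          simp [hM]
        rw [Finset.sum_congr rfl (fun T _ => step1 T)]
        rw [← Finset.sum_subtype (univ.filter fun U : Finset (Fin s) => U.card ≤ r) (by simp)
          (fun U : Finset (Fin s) => (if U ⊆ S then (1 : ZMod 2) else 0) * v U)]
        rw [Finset.sum_subset (Finset.filter_subset _ univ) (by
          intro U _ hU
          simp only [Finset.mem_filter, Finset.mem_univ, true_and] at hU
          rw [hvdef]
          simp [dif_neg hU])]
        have hps : S.powerset = univ.filter fun U : Finset (Fin s) => U ⊆ S := by
          ext U
          simp [Finset.mem_powerset]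
        rw [zeta, hps, Finset.sum_filter]
        apply Finset.sum_congr rfl
        intro U _
        simp [ite_mul]
      rw [e1, e2] at h0
      rw [eq_neg_of_add_eq_zero_right h0, CharTwo.neg_eq]
    have hv0 : v = 0 := by
      by_contra hv
      have hssupp : ∀ T, v T ≠ 0 → T.card ≤ r := by
        intro T hT
        by_contra hc
        rw [hvdef] at hT
        simp [dif_neg hc] at hT
      have hdist := zeta_support_card s (Fin s) (by simp) r v hr hv hssupp
      have hsub : (univ.filter fun S => zeta v S ≠ 0) ⊆ B := by
        intro S hS
        simp only [Finset.mem_filter] at hS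
        by_contra hSB
        rw [hzeta S, dif_neg hSB] at hS
        exact hS.2 rfl
      have hcard := Finset.card_le_card hsub
      have h1 : (1 : ℕ) ≤ 2 ^ (s - r) := Nat.one_le_two_pow
      omega
    funext i
    cases i with
    | inl b =>
      have h1 := hzeta b.1
      rw [hv0, dif_pos b.2] at h1
      have hz : zeta (0 : Finset (Fin s) → ZMod 2) b.1 = 0 := by simp [zeta]
      rw [hz] at h1
      simpa using h1.symm
    | inr T =>
      rw [hxv T, hv0]
      simp
  have hsurj := vecMul_surj M hker
  rintro ⟨a, c⟩
  obtain ⟨u, hu⟩ := hsurj (Sum.elim a c)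
  have hinl : ∀ b : {S // S ∈ B}, Matrix.vecMul u M (Sum.inl b) = u b.1 := by
    intro b
    rw [Matrix.vecMul, dotProduct]
    rw [Finset.sum_eq_single b.1]
    · simp [hM]
    · intro S _ hS
      have : b.1 ≠ S := Ne.symm hS
      simp [hM, this]
    · simp
  refine ⟨u, ?_⟩
  dsimp only
  rw [Prod.mk.injEq]
  constructor
  · funext b
    rw [← hinl b]
    exact congrFun hu (Sum.inl b)
  · funext T
    have h := congrFun hu (Sum.inr T)
    have heq : Matrix.vecMul u (rmW s r) T = Matrix.vecMul u M (Sum.inr T) := rfl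
    exact heq.trans h

end RMaux

open RMaux in
/-- Threshold security of the Reed–Muller-based scheme.  For `u` uniform on
`F₂^(2^s)` and `c = u·W`, for every set `B` of input coordinates with
`|B| ≤ 2^(s-r) - 1`, the vector `(u_S)_{S ∈ B}` is independent of `c`; i.e. the scheme is
`t`-threshold secure with `t = 2^(s-r) - 1`.  Independence under the uniform distribution is
expressed by counting: joint counts factor into products of marginal counts. -/
theorem stmt_13 (s r : ℕ) (hs : 1 ≤ s) (hr : r ≤ s) :
    ∀ B : Finset (Finset (Fin s)), B.card ≤ 2 ^ (s - r) - 1 →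
      ∀ (a : {S // S ∈ B} → ZMod 2) (c : {T : Finset (Fin s) // T.card ≤ r} → ZMod 2),
        (Finset.univ.filter (fun u : Finset (Fin s) → ZMod 2 =>
            (fun S : {S // S ∈ B} => u S.1) = a ∧ Matrix.vecMul u (rmW s r) = c)).card
          * Fintype.card (Finset (Fin s) → ZMod 2)
        = (Finset.univ.filter (fun u : Finset (Fin s) → ZMod 2 =>
            (fun S : {S // S ∈ B} => u S.1) = a)).card
          * (Finset.univ.filter (fun u : Finset (Fin s) → ZMod 2 =>
            Matrix.vecMul u (rmW s r) = c)).card := by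
  intro B hB a c
  classical
  set φ : (Finset (Fin s) → ZMod 2) →+
      ({S // S ∈ B} → ZMod 2) × ({T : Finset (Fin s) // T.card ≤ r} → ZMod 2) :=
    AddMonoidHom.mk' (fun u => ((fun S : {S // S ∈ B} => u S.1), Matrix.vecMul u (rmW s r)))
      (fun u v => by
        rw [Prod.mk_add_mk, Prod.mk.injEq]
        exact ⟨rfl, Matrix.add_vecMul _ _ _⟩) with hφdef
  have hφapp : ∀ u, φ u = ((fun S : {S // S ∈ B} => u S.1), Matrix.vecMul u (rmW s r)) :=
    fun u => rfl
  have hφ_surj : Function.Surjective φ := by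
    intro y
    obtain ⟨u, hu⟩ := joint_surjective s r hr B hB y
    exact ⟨u, hu⟩
  set φ1 := (AddMonoidHom.fst ({S // S ∈ B} → ZMod 2)
    ({T : Finset (Fin s) // T.card ≤ r} → ZMod 2)).comp φ with hφ1
  set φ2 := (AddMonoidHom.snd ({S // S ∈ B} → ZMod 2)
    ({T : Finset (Fin s) // T.card ≤ r} → ZMod 2)).comp φ with hφ2
  have h1surj : Function.Surjective φ1 := by
    intro y
    obtain ⟨u, hu⟩ := hφ_surj (y, 0)
    exact ⟨u, by rw [hφ1, AddMonoidHom.comp_apply, hu]; rfl⟩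
  have h2surj : Function.Surjective φ2 := by
    intro y
    obtain ⟨u, hu⟩ := hφ_surj (0, y)
    exact ⟨u, by rw [hφ2, AddMonoidHom.comp_apply, hu]; rfl⟩
  have hcj := fiber_card φ hφ_surj (a, c)
  have hc1 := fiber_card φ1 h1surj a
  have hc2 := fiber_card φ2 h2surj c
  have ej : (Finset.univ.filter (fun u : Finset (Fin s) → ZMod 2 =>
        (fun S : {S // S ∈ B} => u S.1) = a ∧ Matrix.vecMul u (rmW s r) = c))
      = (Finset.univ.filter fun u => φ u = (a, c)) := by
    apply Finset.filter_congr
    intro u _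
    rw [hφapp, Prod.mk.injEq]
  have e1 : (Finset.univ.filter (fun u : Finset (Fin s) → ZMod 2 =>
        (fun S : {S // S ∈ B} => u S.1) = a))
      = (Finset.univ.filter fun u => φ1 u = a) := by
    apply Finset.filter_congr
    intro u _
    rw [hφ1, AddMonoidHom.comp_apply, hφapp]
    exact Iff.rfl
  have e2 : (Finset.univ.filter (fun u : Finset (Fin s) → ZMod 2 =>
        Matrix.vecMul u (rmW s r) = c))
      = (Finset.univ.filter fun u => φ2 u = c) := by
    apply Finset.filter_congr
    intro u _
    rw [hφ2, AddMonoidHom.comp_apply, hφapp]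
    exact Iff.rfl
  rw [ej, e1, e2]
  rw [Fintype.card_prod] at hcj
  set n1 := Fintype.card ({S // S ∈ B} → ZMod 2)
  set n2 := Fintype.card ({T : Finset (Fin s) // T.card ≤ r} → ZMod 2)
  set cj := (Finset.univ.filter fun u => φ u = (a, c)).card
  set c1 := (Finset.univ.filter fun u => φ1 u = a).card
  set c2 := (Finset.univ.filter fun u => φ2 u = c).card
  set N := Fintype.card (Finset (Fin s) → ZMod 2)
  have hpos : 0 < n1 * n2 := Nat.mul_pos Fintype.card_pos Fintype.card_pos
  apply Nat.eq_of_mul_eq_mul_right hpos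
  calc cj * N * (n1 * n2) = cj * (n1 * n2) * N := by ring
    _ = N * N := by rw [hcj]
    _ = (c1 * n1) * (c2 * n2) := by rw [hc1, hc2]
    _ = c1 * c2 * (n1 * n2) := by ring
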